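/- For every n ≥ 2 there exists a natural number N (depending only on n) such that for every field K with more than 3 elements, every element of SL_n(K) is a product of at most N commutators of elements of SL_n(K). In particular, SL_n(K) equals its own commutator subgroup for every field K with more than 3 elements. -/

import Mathlib

open FirstOrder

/-- The function symbols of the first-order language of groups:
multiplication, inverse, and identity. -/
inductive GroupFunc : ℕ → Type
  | mul : GroupFunc 2
  | inv : GroupFunc 1
  | one : GroupFunc 0

/-- The first-order language of groups. -/
def groupLang : FirstOrder.Language :=
  { Functions := GroupFunc, Relations := fun _ => Empty }

/-- Any group is a structure for the language of groups in the natural way. -/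
instance groupLangStructure (G : Type*) [Group G] : groupLang.Structure G where
  funMap {_} f v :=
    match f with
    | GroupFunc.mul => v 0 * v 1
    | GroupFunc.inv => (v 0)⁻¹
    | GroupFunc.one => 1
  RelMap {_} r := r.elim

/-- Two groups are elementarily equivalent in the first-order language of groups
if they satisfy exactly the same first-order sentences of the group language. -/
def GroupElemEquiv (G H : Type*) [Group G] [Group H] : Prop :=
  groupLang.ElementarilyEquivalent G H

/-- Two rings are elementarily equivalent in the first-order language of rings
if they satisfy exactly the same first-order sentences of the ring language. -/
def RingElemEquiv (R S : Type*) [Ring R] [Ring S] : Prop :=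
  letI := FirstOrder.Ring.compatibleRingOfRing R
  letI := FirstOrder.Ring.compatibleRingOfRing S
  FirstOrder.Language.ring.ElementarilyEquivalent R S

open scoped commutatorElement in
/-- `g` is a product of at most `N` commutators of elements of `G`. -/
def IsProdOfAtMostNCommutators {G : Type*} [Group G] (N : ℕ) (g : G) : Prop :=
  ∃ l : List (G × G), l.length ≤ N ∧ g = (l.map fun q => ⁅q.1, q.2⁆).prod


section Aux
open scoped commutatorElement
open Matrix Sum Matrix.Pivot Matrix.TransvectionStruct
set_option linter.unusedSectionVars false

section Small
variable {K : Type*} [Field K] {n : Type*} [Fintype n] [DecidableEq n]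
open Matrix
variable {K : Type*} [Field K] {n : Type*} [Fintype n] [DecidableEq n]

theorem diagonal_mul_stdBasisMatrix' (d : n → K) (i j : n) (c : K) :
    diagonal d * single i j c = single i j (d i * c) := by
  ext a b
  rw [diagonal_mul]
  simp only [single, of_apply]
  split_ifs with h
  · obtain ⟨rfl, rfl⟩ := h; rfl
  · exact mul_zero _

theorem stdBasisMatrix_mul_diagonal' (d : n → K) (i j : n) (c : K) :
    single i j c * diagonal d = single i j (c * d j) := by
  ext a b
  rw [mul_diagonal]
  simp only [single, of_apply]
  split_ifs with h
  · obtain ⟨rfl, rfl⟩ := h; rfl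
  · exact zero_mul _

/-- The diagonal entries function for the `h`-matrix. -/
def dfun (i j : n) (a : K) : n → K := fun k => if k = i then a else if k = j then a⁻¹ else 1

theorem dfun_det (i j : n) (hij : i ≠ j) (a : K) (ha : a ≠ 0) :
    (Matrix.diagonal (dfun i j a)).det = 1 := by
  rw [det_diagonal]
  rw [← Finset.prod_subset (Finset.subset_univ ({i, j} : Finset n))
    (by intro x _ hx; simp only [Finset.mem_insert, Finset.mem_singleton, not_or] at hx
        simp [dfun, hx.1, hx.2])]
  rw [Finset.prod_pair hij]
  simp [dfun, hij, hij.symm, inv_mul_cancel₀ ha, mul_inv_cancel₀ ha]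

theorem diag_mul_transvection (i j : n) (hij : i ≠ j) (a s : K) (ha : a ≠ 0) :
    Matrix.diagonal (dfun i j a) * Matrix.transvection i j s =
      Matrix.transvection i j ((a * a - 1) * s) *
        (Matrix.transvection i j s * Matrix.diagonal (dfun i j a)) := by
  have hBB : ∀ c d : K, single i j c * single i j d = 0 :=
    fun c d => single_mul_single_of_ne c i j _ hij.symm d
  simp only [Matrix.transvection, Matrix.mul_add, Matrix.add_mul, Matrix.one_mul,
    Matrix.mul_one, diagonal_mul_stdBasisMatrix', stdBasisMatrix_mul_diagonal', hBB,
    add_zero, zero_mul, zero_add, Matrix.zero_mul]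
  have h1 : dfun i j a i = a := by simp [dfun]
  have h2 : dfun i j a j = a⁻¹ := by simp [dfun, hij.symm]
  rw [h1, h2, add_assoc, ← single_add]
  have : (a * a - 1) * s * a⁻¹ + s * a⁻¹ = a * s := by field_simp; ring
  rw [this]
open Matrix
variable {K : Type*} [Field K] {n : Type*} [Fintype n] [DecidableEq n]

/-- Canonical form for matrices differing from `1` only in rows/columns `i, j`. -/
def Pmat (i j : n) (α β γ δ : K) : Matrix n n K :=
  1 + single i i α + single j j β + single i j γ + single j i δ

theorem Pmat_mul {i j : n} (hij : i ≠ j) (α β γ δ α' β' γ' δ' : K) :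
    Pmat i j α β γ δ * Pmat i j α' β' γ' δ' =
      Pmat i j (α + α' + α * α' + γ * δ') (β + β' + β * β' + δ * γ')
        (γ + γ' + α * γ' + γ * β') (δ + δ' + δ * α' + β * δ') := by
  have z1 : ∀ c d : K, single i i c * single j j d = 0 :=
    fun c d => single_mul_single_of_ne c i i _ hij d
  have z2 : ∀ c d : K, single i i c * single j i d = 0 :=
    fun c d => single_mul_single_of_ne c i i _ hij d
  have z3 : ∀ c d : K, single j j c * single i i d = 0 :=
    fun c d => single_mul_single_of_ne c j j _ hij.symm d
  have z4 : ∀ c d : K, single j j c * single i j d = 0 :=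
    fun c d => single_mul_single_of_ne c j j _ hij.symm d
  have z5 : ∀ c d : K, single i j c * single i j d = 0 :=
    fun c d => single_mul_single_of_ne c i j _ hij.symm d
  have z6 : ∀ c d : K, single i j c * single i i d = 0 :=
    fun c d => single_mul_single_of_ne c i j _ hij.symm d
  have z7 : ∀ c d : K, single j i c * single j i d = 0 :=
    fun c d => single_mul_single_of_ne c j i _ hij d
  have z8 : ∀ c d : K, single j i c * single j j d = 0 :=
    fun c d => single_mul_single_of_ne c j i _ hij d
  simp only [Pmat, mul_add, add_mul, one_mul, mul_one,
    single_mul_single_same, z1, z2, z3, z4, z5, z6, z7, z8, add_zero, zero_add,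
    single_add]
  abel

theorem Pmat_congr (i j : n) {α β γ δ α' β' γ' δ' : K} (h1 : α = α') (h2 : β = β')
    (h3 : γ = γ') (h4 : δ = δ') : Pmat i j α β γ δ = Pmat i j α' β' γ' δ' := by
  rw [h1, h2, h3, h4]

theorem transvection_eq_Pmat (i j : n) (c : K) :
    transvection i j c = Pmat i j 0 0 c 0 := by
  simp [transvection, Pmat, single_zero]

theorem transvection_eq_Pmat' (i j : n) (c : K) :
    transvection j i c = Pmat i j 0 0 0 c := by
  simp [transvection, Pmat, single_zero]


theorem diagonal_dfun_eq_Pmat {i j : n} (hij : i ≠ j) (a : K) :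
    Matrix.diagonal (dfun i j a) = Pmat i j (a - 1) (a⁻¹ - 1) 0 0 := by
  ext k l
  by_cases hk : k = i <;> by_cases hk' : k = j <;> by_cases hl : l = k <;>
    simp_all [Pmat, dfun, Matrix.add_apply, Matrix.one_apply, diagonal, hij, hij.symm,
      single_apply_same, single, Matrix.of_apply]
  all_goals split_ifs <;> subst_vars <;> simp_all <;> try ring

theorem diagonal_dfun_eq_prod_transvections {i j : n} (hij : i ≠ j) (a : K) (ha : a ≠ 0) :
    Matrix.diagonal (dfun i j a) =
      transvection i j a * transvection j i (-a⁻¹) * transvection i j a *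
        transvection i j (-1) * transvection j i 1 * transvection i j (-1) := by
  rw [transvection_eq_Pmat' i j (-a⁻¹), transvection_eq_Pmat' i j 1,
    transvection_eq_Pmat i j a, transvection_eq_Pmat i j (-1), diagonal_dfun_eq_Pmat hij,
    Pmat_mul hij, Pmat_mul hij, Pmat_mul hij, Pmat_mul hij, Pmat_mul hij]
  apply Pmat_congr <;> field_simp <;> ring
open Matrix Matrix.TransvectionStruct
variable {K : Type*} [Field K] {n : Type*} [Fintype n] [DecidableEq n]



/-- The six transvection structs whose product is `diagonal (dfun i j a)`. -/
def hList (i j : n) (hij : i ≠ j) (a : K) : List (TransvectionStruct n K) :=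
  [⟨i, j, hij, a⟩, ⟨j, i, hij.symm, -a⁻¹⟩, ⟨i, j, hij, a⟩, ⟨i, j, hij, -1⟩,
    ⟨j, i, hij.symm, 1⟩, ⟨i, j, hij, -1⟩]

theorem hList_prod (i j : n) (hij : i ≠ j) (a : K) (ha : a ≠ 0) :
    ((hList i j hij a).map toMatrix).prod = Matrix.diagonal (dfun i j a) := by
  rw [diagonal_dfun_eq_prod_transvections hij a ha]
  simp [hList, toMatrix_mk, Matrix.mul_assoc]

theorem diag_decomp_aux (s : Finset n) :
    ∀ D : n → K, (∀ i, D i ≠ 0) → (∀ i ∉ s, D i = 1) → (∏ i ∈ s, D i) = 1 →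
    ∃ L : List (TransvectionStruct n K),
      L.length ≤ 6 * s.card ∧ Matrix.diagonal D = (L.map toMatrix).prod := by
  induction s using Finset.strongInduction with
  | _ s IH =>
    intro D hD hsupp hprod
    rcases Finset.eq_empty_or_nonempty s with rfl | ⟨i, hi⟩
    · refine ⟨[], by simp, ?_⟩
      have : D = fun _ => 1 := funext fun k => hsupp k (by simp)
      simp [this]
    rcases Finset.eq_empty_or_nonempty (s.erase i) with he | ⟨j, hj⟩
    · -- s = {i}, and D i = 1
      have hsi : s = {i} := by
        apply Finset.eq_singleton_iff_unique_mem.2 ⟨hi, fun x hx => ?_⟩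
        by_contra hxi
        exact Finset.notMem_empty x (he ▸ Finset.mem_erase.2 ⟨hxi, hx⟩)
      have hDi : D i = 1 := by rw [hsi] at hprod; simpa using hprod
      refine ⟨[], by simp, ?_⟩
      have : D = fun _ => 1 := by
        funext k
        by_cases hk : k = i
        · rw [hk, hDi]
        · exact hsupp k (by rw [hsi]; simpa using hk)
      simp [this]
    · have hij : i ≠ j := fun h => (Finset.mem_erase.1 hj).1 h.symm
      set D' : n → K := Function.update (Function.update D j (D j * D i)) i 1 with hD'
      have hD'ne : ∀ k, D' k ≠ 0 := by
        intro k
        by_cases hk : k = i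
        · simp [hD', hk]
        · by_cases hk' : k = j
          · subst hk'
            simp [hD', Function.update_of_ne hk, mul_ne_zero (hD k) (hD i)]
          · simp [hD', Function.update_of_ne hk, Function.update_of_ne hk', hD k]
      have hD'supp : ∀ k ∉ s.erase i, D' k = 1 := by
        intro k hk
        by_cases hki : k = i
        · simp [hD', hki]
        · have hks : k ∉ s := fun h => hk (Finset.mem_erase.2 ⟨hki, h⟩)
          have hkj : k ≠ j := fun h => hks (h ▸ (Finset.mem_erase.1 hj).2)
          simp [hD', Function.update_of_ne hki, Function.update_of_ne hkj, hsupp k hks]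
      have hD'prod : (∏ k ∈ s.erase i, D' k) = 1 := by
        rw [Finset.prod_congr rfl (fun k hk =>
          (Function.update_of_ne (Finset.mem_erase.1 hk).1 _ _ : D' k = _))]
        rw [← Finset.mul_prod_erase _ _ hj, Function.update_self]
        rw [Finset.prod_congr rfl (fun k hk =>
          (Function.update_of_ne (Finset.mem_erase.1 hk).1 _ _ : _ = D k))]
        rw [← hprod, ← Finset.mul_prod_erase _ _ hi, ← Finset.mul_prod_erase _ _ hj]
        ring
      obtain ⟨L', hL'len, hL'⟩ := IH (s.erase i) (Finset.erase_ssubset hi) D' hD'ne hD'supp hD'prod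
      refine ⟨hList i j hij (D i) ++ L', ?_, ?_⟩
      · have hpos : 0 < s.card := Finset.card_pos.2 ⟨i, hi⟩
        have : s.card = (s.erase i).card + 1 := by
          rw [Finset.card_erase_of_mem hi]; omega
        simp only [List.length_append, hList, List.length_cons, List.length_nil]
        omega
      · have keyf : D = fun k => dfun i j (D i) k * D' k := by
          funext k
          by_cases hk : k = i
          · subst hk; simp [dfun, hD']
          · by_cases hk' : k = j
            · subst hk'
              simp only [dfun, hD', if_neg hk, if_pos rfl, Function.update_of_ne hk,
                Function.update_self]
              rw [if_pos trivial, mul_comm (D k) (D i), inv_mul_cancel_left₀ (hD i)]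
            · simp [dfun, hk, hk', hD', Function.update_of_ne hk, Function.update_of_ne hk']
        have key : Matrix.diagonal D = Matrix.diagonal (dfun i j (D i)) * Matrix.diagonal D' := by
          rw [diagonal_mul_diagonal]
          exact congrArg _ keyf
        rw [key, hL', List.map_append, List.prod_append, hList_prod i j hij (D i) (hD i)]
end Small

open Matrix Sum Matrix.Pivot Matrix.TransvectionStruct

variable {𝕜 : Type*} [Field 𝕜]

theorem bdd_twoBlock_of_ne_zero {r : ℕ} (M : Matrix (Fin r ⊕ Unit) (Fin r ⊕ Unit) 𝕜)
    (hM : M (inr Unit.unit) (inr Unit.unit) ≠ 0) :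
    ∃ L L' : List (TransvectionStruct (Fin r ⊕ Unit) 𝕜),
      L.length = r ∧ L'.length = r ∧
      IsTwoBlockDiagonal ((L.map toMatrix).prod * M * (L'.map toMatrix).prod) := by
  let L : List (TransvectionStruct (Fin r ⊕ Unit) 𝕜) :=
    List.ofFn fun i : Fin r =>
      ⟨inl i, inr Unit.unit, by simp, -M (inl i) (inr Unit.unit) / M (inr Unit.unit) (inr Unit.unit)⟩
  let L' : List (TransvectionStruct (Fin r ⊕ Unit) 𝕜) :=
    List.ofFn fun i : Fin r =>
      ⟨inr Unit.unit, inl i, by simp, -M (inr Unit.unit) (inl i) / M (inr Unit.unit) (inr Unit.unit)⟩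
  refine ⟨L, L', by simp [L], by simp [L'], ?_⟩
  have A : L.map toMatrix = listTransvecCol M := by simp [L, listTransvecCol, Function.comp_def]
  have B : L'.map toMatrix = listTransvecRow M := by simp [L', listTransvecRow, Function.comp_def]
  rw [A, B]
  exact isTwoBlockDiagonal_listTransvecCol_mul_mul_listTransvecRow M hM

theorem bdd_twoBlock {r : ℕ} (M : Matrix (Fin r ⊕ Unit) (Fin r ⊕ Unit) 𝕜) :
    ∃ L L' : List (TransvectionStruct (Fin r ⊕ Unit) 𝕜),
      L.length ≤ r + 1 ∧ L'.length ≤ r + 1 ∧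
      IsTwoBlockDiagonal ((L.map toMatrix).prod * M * (L'.map toMatrix).prod) := by
  by_cases H : IsTwoBlockDiagonal M
  · exact ⟨List.nil, List.nil, by simp, by simp, by simpa using H⟩
  by_cases hM : M (inr Unit.unit) (inr Unit.unit) ≠ 0
  · obtain ⟨L, L', h1, h2, h3⟩ := bdd_twoBlock_of_ne_zero M hM
    exact ⟨L, L', by omega, by omega, h3⟩
  push_neg at hM
  simp only [not_and_or, IsTwoBlockDiagonal, toBlocks₁₂, toBlocks₂₁, ← Matrix.ext_iff] at H
  have : ∃ i : Fin r, M (inl i) (inr Unit.unit) ≠ 0 ∨ M (inr Unit.unit) (inl i) ≠ 0 := by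
    cases' H with H H
    · contrapose! H
      rintro i ⟨⟩
      exact (H i).1
    · contrapose! H
      rintro ⟨⟩ j
      exact (H j).2
  rcases this with ⟨i, h | h⟩
  · let M' := transvection (inr Unit.unit) (inl i) 1 * M
    have hM' : M' (inr Unit.unit) (inr Unit.unit) ≠ 0 := by simpa [M', hM]
    rcases bdd_twoBlock_of_ne_zero M' hM' with ⟨L, L', hL, hL', hLL'⟩
    rw [Matrix.mul_assoc] at hLL'
    refine ⟨L ++ [⟨inr Unit.unit, inl i, by simp, 1⟩], L', by simp [hL], by omega, ?_⟩
    simp only [List.map_append, List.prod_append, Matrix.mul_one, toMatrix_mk, List.prod_cons,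
      List.prod_nil, List.map, Matrix.mul_assoc (L.map toMatrix).prod]
    exact hLL'
  · let M' := M * transvection (inl i) (inr Unit.unit) 1
    have hM' : M' (inr Unit.unit) (inr Unit.unit) ≠ 0 := by simpa [M', hM]
    rcases bdd_twoBlock_of_ne_zero M' hM' with ⟨L, L', hL, hL', hLL'⟩
    refine ⟨L, ⟨inl i, inr Unit.unit, by simp, 1⟩::L', by omega, by simp [hL'], ?_⟩
    simp only [← Matrix.mul_assoc, toMatrix_mk, List.prod_cons, List.map]
    rw [Matrix.mul_assoc (L.map toMatrix).prod]
    exact hLL'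

theorem bdd_induction {r : ℕ} (b : ℕ)
    (IH : ∀ M : Matrix (Fin r) (Fin r) 𝕜,
        ∃ (L₀ L₀' : List (TransvectionStruct (Fin r) 𝕜)) (D₀ : Fin r → 𝕜),
          L₀.length ≤ b ∧ L₀'.length ≤ b ∧
          (L₀.map toMatrix).prod * M * (L₀'.map toMatrix).prod = diagonal D₀)
    (M : Matrix (Fin r ⊕ Unit) (Fin r ⊕ Unit) 𝕜) :
    ∃ (L L' : List (TransvectionStruct (Fin r ⊕ Unit) 𝕜)) (D : Fin r ⊕ Unit → 𝕜),
      L.length ≤ b + (r + 1) ∧ L'.length ≤ b + (r + 1) ∧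
      (L.map toMatrix).prod * M * (L'.map toMatrix).prod = diagonal D := by
  rcases bdd_twoBlock M with ⟨L₁, L₁', hlen1, hlen1', hM⟩
  let M' := (L₁.map toMatrix).prod * M * (L₁'.map toMatrix).prod
  let M'' := toBlocks₁₁ M'
  rcases IH M'' with ⟨L₀, L₀', D₀, hlen0, hlen0', h₀⟩
  set c := M' (inr Unit.unit) (inr Unit.unit)
  refine
    ⟨L₀.map (sumInl Unit) ++ L₁, L₁' ++ L₀'.map (sumInl Unit),
      Sum.elim D₀ fun _ => M' (inr Unit.unit) (inr Unit.unit),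
      by simp; omega, by simp; omega, ?_⟩
  suffices (L₀.map (toMatrix ∘ sumInl Unit)).prod * M' * (L₀'.map (toMatrix ∘ sumInl Unit)).prod =
      diagonal (Sum.elim D₀ fun _ => c) by
    simpa [M', c, Matrix.mul_assoc]
  have : M' = fromBlocks M'' 0 0 (diagonal fun _ => c) := by
    rw [← fromBlocks_toBlocks M', hM.1, hM.2]
    rfl
  rw [this]
  simp [h₀]

theorem bdd_reindex {p n : Type} [Fintype p] [Fintype n] [DecidableEq p] [DecidableEq n]
    (b : ℕ) (M : Matrix p p 𝕜) (e : p ≃ n)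
    (H : ∃ (L L' : List (TransvectionStruct n 𝕜)) (D : n → 𝕜),
        L.length ≤ b ∧ L'.length ≤ b ∧
        (L.map toMatrix).prod * Matrix.reindexAlgEquiv 𝕜 _ e M * (L'.map toMatrix).prod =
          diagonal D) :
    ∃ (L L' : List (TransvectionStruct p 𝕜)) (D : p → 𝕜),
      L.length ≤ b ∧ L'.length ≤ b ∧
      (L.map toMatrix).prod * M * (L'.map toMatrix).prod = diagonal D := by
  rcases H with ⟨L₀, L₀', D₀, hl, hl', h₀⟩
  refine ⟨L₀.map (reindexEquiv e.symm), L₀'.map (reindexEquiv e.symm), D₀ ∘ e,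
    by simpa using hl, by simpa using hl', ?_⟩
  have : M = reindexAlgEquiv 𝕜 _ e.symm (reindexAlgEquiv 𝕜 _ e M) := by
    simp only [Equiv.symm_symm, submatrix_submatrix, reindex_apply, submatrix_id_id,
      Equiv.symm_comp_self, reindexAlgEquiv_apply]
  rw [this]
  simp only [toMatrix_reindexEquiv_prod, List.map_map, reindexAlgEquiv_apply]
  simp only [← reindexAlgEquiv_apply 𝕜, ← reindexAlgEquiv_mul, h₀]
  simp only [Equiv.symm_symm, reindex_apply, submatrix_diagonal_equiv, reindexAlgEquiv_apply]

theorem bdd_aux (n : Type) [Fintype n] [DecidableEq n] (M : Matrix n n 𝕜) :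
    ∃ (L L' : List (TransvectionStruct n 𝕜)) (D : n → 𝕜),
      L.length ≤ (Fintype.card n) ^ 2 ∧ L'.length ≤ (Fintype.card n) ^ 2 ∧
      (L.map toMatrix).prod * M * (L'.map toMatrix).prod = diagonal D := by
  induction' hn : Fintype.card n with r IH generalizing n M
  · refine ⟨List.nil, List.nil, fun _ => 1, by simp, by simp, ?_⟩
    ext i j
    rw [Fintype.card_eq_zero_iff] at hn
    exact hn.elim' i
  · have e : n ≃ Fin r ⊕ Unit := by
      refine Fintype.equivOfCardEq ?_
      rw [hn, @Fintype.card_sum (Fin r) Unit _ _]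
      simp
    apply bdd_reindex ((r + 1) ^ 2) M e
    have : ∀ M : Matrix (Fin r) (Fin r) 𝕜,
        ∃ (L₀ L₀' : List (TransvectionStruct (Fin r) 𝕜)) (D₀ : Fin r → 𝕜),
          L₀.length ≤ r ^ 2 ∧ L₀'.length ≤ r ^ 2 ∧
          (L₀.map toMatrix).prod * M * (L₀'.map toMatrix).prod = diagonal D₀ := by
      intro N
      have := IH (Fin r) N (by simp)
      simpa using this
    obtain ⟨L, L', D, h1, h2, h3⟩ := bdd_induction (r ^ 2) this (Matrix.reindexAlgEquiv 𝕜 _ e M)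
    exact ⟨L, L', D, by nlinarith, by nlinarith, h3⟩

theorem bdd_decomp {n : Type} [Fintype n] [DecidableEq n] (M : Matrix n n 𝕜) :
    ∃ (L L' : List (TransvectionStruct n 𝕜)) (D : n → 𝕜),
      L.length ≤ (Fintype.card n) ^ 2 ∧ L'.length ≤ (Fintype.card n) ^ 2 ∧
      M = (L.map toMatrix).prod * diagonal D * (L'.map toMatrix).prod := by
  rcases bdd_aux n M with ⟨L, L', D, hl, hl', h⟩
  refine ⟨L.reverse.map TransvectionStruct.inv, L'.reverse.map TransvectionStruct.inv, D,
    by simpa using hl, by simpa using hl', ?_⟩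
  suffices
    M =
      (L.reverse.map (toMatrix ∘ TransvectionStruct.inv)).prod * (L.map toMatrix).prod * M *
        ((L'.map toMatrix).prod * (L'.reverse.map (toMatrix ∘ TransvectionStruct.inv)).prod)
    by simpa [← h, Matrix.mul_assoc]
  rw [reverse_inv_prod_mul_prod, prod_mul_reverse_inv_prod, Matrix.one_mul, Matrix.mul_one]

section Assemble
variable {K : Type*} [Field K] {n : Type} [Fintype n] [DecidableEq n]
/-- Every matrix of determinant 1 is a product of boundedly many transvections. -/
theorem det_one_eq_prod_transvections (M : Matrix n n K) (hM : M.det = 1) :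
    ∃ L : List (TransvectionStruct n K),
      L.length ≤ 2 * (Fintype.card n) ^ 2 + 6 * Fintype.card n ∧
      M = (L.map toMatrix).prod := by
  obtain ⟨L, L', D, hl, hl', h⟩ := bdd_decomp M
  have hdetD : (Matrix.diagonal D).det = 1 := by
    have := hM
    rw [h, det_mul, det_mul, det_toMatrix_prod, det_toMatrix_prod, one_mul, mul_one] at this
    exact this
  have hprodD : (∏ i, D i) = 1 := by rwa [det_diagonal] at hdetD
  have hDne : ∀ i, D i ≠ 0 := by
    intro i hi
    rw [Finset.prod_eq_zero (Finset.mem_univ i) hi] at hprodD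
    exact zero_ne_one hprodD
  obtain ⟨LD, hLDlen, hLD⟩ := diag_decomp_aux Finset.univ D hDne (by simp) hprodD
  refine ⟨L ++ LD ++ L', ?_, ?_⟩
  · simp only [List.length_append]
    have := hLDlen
    simp only [Finset.card_univ] at this
    omega
  · rw [h, hLD]
    simp [List.map_append, List.prod_append, Matrix.mul_assoc]

variable (K n) in
/-- The coercion from the special linear group to matrices, as a monoid hom. -/
def slCoeHom : Matrix.SpecialLinearGroup n K →* Matrix n n K where
  toFun g := g.1
  map_one' := rfl
  map_mul' _ _ := rfl

/-- A transvection, seen in the special linear group. -/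
def tSL (t : TransvectionStruct n K) : Matrix.SpecialLinearGroup n K :=
  ⟨t.toMatrix, t.det⟩

theorem tSL_commutator (a : K) (ha : a ≠ 0) (ha2 : a * a ≠ 1) (t : TransvectionStruct n K) :
    ∃ x y : Matrix.SpecialLinearGroup n K, ⁅x, y⁆ = tSL t := by
  obtain ⟨i, j, hij, c⟩ := t
  have hsub : a * a - 1 ≠ 0 := sub_ne_zero.mpr ha2
  set s := c / (a * a - 1) with hs
  refine ⟨⟨Matrix.diagonal (dfun i j a), dfun_det i j hij a ha⟩,
    ⟨Matrix.transvection i j s, det_transvection_of_ne i j hij s⟩, ?_⟩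
  have hcs : (a * a - 1) * s = c := by rw [hs, mul_comm (a * a - 1), div_mul_cancel₀ c hsub]
  have key : Matrix.diagonal (dfun i j a) * Matrix.transvection i j s =
      Matrix.transvection i j c *
        (Matrix.transvection i j s * Matrix.diagonal (dfun i j a)) := by
    rw [← hcs]
    exact diag_mul_transvection i j hij a s ha
  set x : Matrix.SpecialLinearGroup n K := ⟨Matrix.diagonal (dfun i j a), dfun_det i j hij a ha⟩
  set y : Matrix.SpecialLinearGroup n K := ⟨Matrix.transvection i j s,
    det_transvection_of_ne i j hij s⟩
  have hxy : x * y = tSL ⟨i, j, hij, c⟩ * (y * x) := by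
    apply Subtype.ext
    show (x.1 * y.1 : Matrix n n K) = _
    rw [key]; rfl
  rw [commutatorElement_def]
  rw [show x * y = tSL ⟨i, j, hij, c⟩ * (y * x) from hxy]
  group

theorem isProd_of_list {G : Type*} [Group G] (l : List G)
    (h : ∀ g ∈ l, ∃ x y : G, ⁅x, y⁆ = g) :
    ∃ lp : List (G × G), lp.length = l.length ∧ l.prod = (lp.map fun q => ⁅q.1, q.2⁆).prod := by
  induction l with
  | nil => exact ⟨[], rfl, rfl⟩
  | cons g l ih =>
    obtain ⟨x, y, hxy⟩ := h g List.mem_cons_self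
    obtain ⟨lp, hlen, hprod⟩ := ih fun g' hg' => h g' (List.mem_cons_of_mem _ hg')
    exact ⟨(x, y) :: lp, by simp [hlen], by simp [hxy, hprod]⟩

theorem exists_big_elem (K : Type*) [Field K] (hK : 3 < Cardinal.mk K) :
    ∃ a : K, a ≠ 0 ∧ a * a ≠ 1 := by
  by_contra h
  push_neg at h
  have hsub : (Set.univ : Set K) ⊆ {0, 1, -1} := by
    intro a _
    by_cases ha : a = 0
    · simp [ha]
    · have := h a ha
      rcases mul_self_eq_one_iff.1 this with h1 | h1 <;> simp [h1]
  have : Cardinal.mk K ≤ 3 := by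
    calc Cardinal.mk K = Cardinal.mk (Set.univ : Set K) := (@Cardinal.mk_univ K).symm
    _ ≤ Cardinal.mk ({0, 1, -1} : Set K) := Cardinal.mk_le_mk_of_subset hsub
    _ ≤ 3 := by
        refine le_trans (Cardinal.mk_insert_le) ?_
        have h2 : Cardinal.mk ({1, -1} : Set K) ≤ 2 := by
          refine le_trans (Cardinal.mk_insert_le) ?_
          simp [Cardinal.mk_singleton]
          norm_num
        calc Cardinal.mk ({1, -1} : Set K) + 1 ≤ 2 + 1 := by
              exact add_le_add h2 le_rfl
        _ = 3 := by norm_num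
  exact absurd hK (not_lt.2 this)


end Assemble
end Aux

/-- For every `n ≥ 2` there is a natural number `N` (depending only on `n`) such that for
every field `K` with more than 3 elements, every element of `SL_n(K)` is a product of at
most `N` commutators; in particular `SL_n(K)` is its own commutator subgroup. -/
theorem sl_boundedCommutatorWidth (n : ℕ) (hn : 2 ≤ n) :
    ∃ N : ℕ, ∀ (K : Type) [Field K], 3 < Cardinal.mk K →
      (∀ g : Matrix.SpecialLinearGroup (Fin n) K, IsProdOfAtMostNCommutators N g) ∧
        commutator (Matrix.SpecialLinearGroup (Fin n) K) = ⊤ := by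
  refine ⟨2 * n ^ 2 + 6 * n, fun K _ hK => ?_⟩
  obtain ⟨a, ha, ha2⟩ := exists_big_elem K hK
  have main : ∀ g : Matrix.SpecialLinearGroup (Fin n) K,
      IsProdOfAtMostNCommutators (2 * n ^ 2 + 6 * n) g := by
    intro g
    obtain ⟨L, hLlen, hL⟩ := det_one_eq_prod_transvections (g.1 : Matrix (Fin n) (Fin n) K) g.2
    have hg : g = (L.map tSL).prod := by
      apply Subtype.ext
      have : ((L.map tSL).prod).1 = ((L.map tSL).map (slCoeHom K (Fin n))).prod :=
        map_list_prod (slCoeHom K (Fin n)) _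
      rw [this, List.map_map]
      exact hL.trans (by rfl)
    open scoped commutatorElement in
    have hcomm : ∀ g' ∈ L.map tSL, ∃ x y : Matrix.SpecialLinearGroup (Fin n) K, ⁅x, y⁆ = g' := by
      rintro g' hg'
      obtain ⟨t, _, rfl⟩ := List.mem_map.1 hg'
      exact tSL_commutator a ha ha2 t
    obtain ⟨lp, hlplen, hlprod⟩ := isProd_of_list (L.map tSL) hcomm
    refine ⟨lp, ?_, ?_⟩
    · rw [hlplen, List.length_map]
      simpa [Fintype.card_fin] using hLlen
    · rw [hg, hlprod]
  refine ⟨main, ?_⟩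
  rw [Subgroup.eq_top_iff']
  intro g
  obtain ⟨lp, _, hprod⟩ := main g
  rw [hprod]
  apply list_prod_mem
  intro x hx
  obtain ⟨q, _, rfl⟩ := List.mem_map.1 hx
  exact Subgroup.commutator_mem_commutator (Subgroup.mem_top q.1) (Subgroup.mem_top q.2)
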